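/- Let A be a primitive J(α,β)-axial algebra generated by a finite set S of primitive J(α,β)-axes. For each integer i ≥ 0 let S[i] denote the F-linear span of all elements τ_{a_1}τ_{a_2}⋯τ_{a_l}(b) with 0 ≤ l ≤ i and a_1, …, a_l, b ∈ S. If S[n] = S[n+1] for some n ≥ 1, then A = S[n]. -/

import Mathlib

variable (F : Type*) [Field F] (A : Type*) [NonUnitalNonAssocCommRing A]
  [Module F A] [SMulCommClass F A A] [IsScalarTower F A A]

/-- The `l`-eigenspace of the left multiplication operator `ad_a`. -/
def eigSp (a : A) (l : F) : Submodule F A where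
  carrier := {x | a * x = l • x}
  add_mem' := by
    intro x y hx hy
    simp only [Set.mem_setOf_eq] at *
    rw [mul_add, hx, hy, smul_add]
  zero_mem' := by simp
  smul_mem' := by
    intro c x hx
    simp only [Set.mem_setOf_eq] at *
    rw [mul_smul_comm, hx, smul_comm]

/-- `a` is a `J(α,β)`-axis: an idempotent whose adjoint is semisimple with
eigenvalues among `1, α, β`, satisfying the fusion law `J(α,β)`. -/
structure IsJAxis (α β : F) (a : A) : Prop where
  idem : a * a = a
  decomp : eigSp F A a 1 ⊔ eigSp F A a α ⊔ eigSp F A a β = ⊤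
  f11 : ∀ x ∈ eigSp F A a 1, ∀ y ∈ eigSp F A a 1, x * y ∈ eigSp F A a 1
  f1a : ∀ x ∈ eigSp F A a 1, ∀ y ∈ eigSp F A a α, x * y ∈ eigSp F A a α
  f1b : ∀ x ∈ eigSp F A a 1, ∀ y ∈ eigSp F A a β, x * y ∈ eigSp F A a β
  faa : ∀ x ∈ eigSp F A a α, ∀ y ∈ eigSp F A a α, x * y ∈ eigSp F A a 1 ⊔ eigSp F A a α
  fab : ∀ x ∈ eigSp F A a α, ∀ y ∈ eigSp F A a β, x * y ∈ eigSp F A a β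
  fbb : ∀ x ∈ eigSp F A a β, ∀ y ∈ eigSp F A a β, x * y ∈ eigSp F A a 1 ⊔ eigSp F A a α

/-- A primitive `J(α,β)`-axis: `A_1(a) = F·a`. -/
def IsPrimJAxis (α β : F) (a : A) : Prop :=
  IsJAxis F A α β a ∧ eigSp F A a 1 = Submodule.span F {a}

/-- `A` is a primitive `J(α,β)`-axial algebra: generated as an `F`-algebra by a
set of primitive `J(α,β)`-axes. -/
def IsJAxialAlg (α β : F) : Prop :=
  ∃ S : Set A, (∀ a ∈ S, IsPrimJAxis F A α β a) ∧ NonUnitalAlgebra.adjoin F S = ⊤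

/-- The `(⋆)` condition: for any two primitive axes `a, b`, writing
`b = x • a + bα + bβ`, the projection of `a` onto `A_1(b)` equals `x • b`. -/
def StarCond (α β : F) : Prop :=
  ∀ a b : A, IsPrimJAxis F A α β a → IsPrimJAxis F A α β b →
    ∀ x : F, ∀ bα ∈ eigSp F A a α, ∀ bβ ∈ eigSp F A a β, b = x • a + bα + bβ →
      ∃ aα ∈ eigSp F A b α, ∃ aβ ∈ eigSp F A b β, a = x • b + aα + aβ

/-- A Frobenius form: a nonzero symmetric bilinear form that associates with
the product. -/
def IsFrobenius (B : A →ₗ[F] A →ₗ[F] F) : Prop :=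
  B ≠ 0 ∧ (∀ u v, B u v = B v u) ∧ ∀ u v w, B u (v * w) = B (u * v) w

/-- `τ` is the Miyamoto involution associated to the axis `a`: it fixes
`A_1(a) ⊕ A_α(a)` pointwise and negates `A_β(a)`. -/
def IsMiyamoto (α β : F) (a : A) (τ : A →ₗ[F] A) : Prop :=
  (∀ x ∈ eigSp F A a 1 ⊔ eigSp F A a α, τ x = x) ∧ ∀ x ∈ eigSp F A a β, τ x = -x

/-- `Sbracket T S i` is the span of all elements `τ_(a_1) ⋯ τ_(a_l) b` with
`l ≤ i`, `a_1, …, a_l, b ∈ S`, where `T a` is the Miyamoto involution of `a`. -/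
def Sbracket (T : A → (A →ₗ[F] A)) (S : Set A) (i : ℕ) : Submodule F A :=
  Submodule.span F
    {x : A | ∃ as : List A, as.length ≤ i ∧ (∀ a ∈ as, a ∈ S) ∧
        ∃ b ∈ S, x = as.foldr (fun a y => T a y) b}

set_option linter.unusedSectionVars false
set_option linter.unusedVariables false

section AuxLemmas
variable {F A}


lemma mem_eigSp {a x : A} {l : F} : x ∈ eigSp F A a l ↔ a * x = l • x := Iff.rfl

lemma exists_decomp2 {α β : F} {a : A} (h : IsJAxis F A α β a) (x : A) :
    ∃ xp ∈ eigSp F A a 1 ⊔ eigSp F A a α, ∃ xm ∈ eigSp F A a β, x = xp + xm := by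
  have hx : x ∈ eigSp F A a 1 ⊔ eigSp F A a α ⊔ eigSp F A a β := h.decomp ▸ Submodule.mem_top
  obtain ⟨xp, hp, xm, hm, rfl⟩ := Submodule.mem_sup.mp hx
  exact ⟨xp, hp, xm, hm, rfl⟩

lemma exists_decomp3 {α β : F} {a : A} (h : IsJAxis F A α β a) (x : A) :
    ∃ x1 ∈ eigSp F A a 1, ∃ xa ∈ eigSp F A a α, ∃ xb ∈ eigSp F A a β,
      x = x1 + xa + xb := by
  obtain ⟨xp, hp, xm, hm, rfl⟩ := exists_decomp2 h x
  obtain ⟨x1, h1, xa, ha, rfl⟩ := Submodule.mem_sup.mp hp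
  exact ⟨x1, h1, xa, ha, xm, hm, rfl⟩

lemma tau_apply {α β : F} {a : A} {τ : A →ₗ[F] A} (hM : IsMiyamoto F A α β a τ)
    {xp xm : A} (hp : xp ∈ eigSp F A a 1 ⊔ eigSp F A a α) (hm : xm ∈ eigSp F A a β) :
    τ (xp + xm) = xp - xm := by
  rw [map_add, hM.1 _ hp, hM.2 _ hm, sub_eq_add_neg]

lemma tau_invol {α β : F} {a : A} {τ : A →ₗ[F] A} (h : IsJAxis F A α β a)
    (hM : IsMiyamoto F A α β a τ) (x : A) : τ (τ x) = x := by
  obtain ⟨xp, hp, xm, hm, rfl⟩ := exists_decomp2 h x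
  rw [tau_apply hM hp hm, sub_eq_add_neg, tau_apply hM hp (neg_mem hm), sub_neg_eq_add]

lemma mul_mem_pp {α β : F} {a : A} (h : IsJAxis F A α β a) {x y : A}
    (hx : x ∈ eigSp F A a 1 ⊔ eigSp F A a α) (hy : y ∈ eigSp F A a 1 ⊔ eigSp F A a α) :
    x * y ∈ eigSp F A a 1 ⊔ eigSp F A a α := by
  obtain ⟨x1, hx1, xa, hxa, rfl⟩ := Submodule.mem_sup.mp hx
  obtain ⟨y1, hy1, ya, hya, rfl⟩ := Submodule.mem_sup.mp hy
  have e : (x1 + xa) * (y1 + ya) = (x1 * y1 + x1 * ya) + (xa * y1 + xa * ya) := by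
    rw [add_mul, mul_add, mul_add]
  rw [e]
  refine add_mem (add_mem ?_ ?_) (add_mem ?_ ?_)
  · exact Submodule.mem_sup_left (h.f11 _ hx1 _ hy1)
  · exact Submodule.mem_sup_right (h.f1a _ hx1 _ hya)
  · rw [mul_comm]; exact Submodule.mem_sup_right (h.f1a _ hy1 _ hxa)
  · exact h.faa _ hxa _ hya

lemma mul_mem_pm {α β : F} {a : A} (h : IsJAxis F A α β a) {x y : A}
    (hx : x ∈ eigSp F A a 1 ⊔ eigSp F A a α) (hy : y ∈ eigSp F A a β) :
    x * y ∈ eigSp F A a β := by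
  obtain ⟨x1, hx1, xa, hxa, rfl⟩ := Submodule.mem_sup.mp hx
  rw [add_mul]
  exact add_mem (h.f1b _ hx1 _ hy) (h.fab _ hxa _ hy)

lemma tau_mul {α β : F} {a : A} {τ : A →ₗ[F] A} (h : IsJAxis F A α β a)
    (hM : IsMiyamoto F A α β a τ) (x y : A) : τ (x * y) = τ x * τ y := by
  obtain ⟨xp, hxp, xm, hxm, rfl⟩ := exists_decomp2 h x
  obtain ⟨yp, hyp, ym, hym, rfl⟩ := exists_decomp2 h y
  have hP : xp * yp + xm * ym ∈ eigSp F A a 1 ⊔ eigSp F A a α :=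
    add_mem (mul_mem_pp h hxp hyp) (h.fbb _ hxm _ hym)
  have hQ : xp * ym + xm * yp ∈ eigSp F A a β := by
    refine add_mem (mul_mem_pm h hxp hym) ?_
    rw [mul_comm]; exact mul_mem_pm h hyp hxm
  have e : (xp + xm) * (yp + ym) = (xp * yp + xm * ym) + (xp * ym + xm * yp) := by
    rw [add_mul, mul_add, mul_add]; abel
  rw [e, tau_apply hM hP hQ, tau_apply hM hxp hxm, tau_apply hM hyp hym,
    sub_mul, mul_sub, mul_sub]
  abel

lemma mul_axis_mem_span {α β : F} {a : A} (h2 : (2 : F) ≠ 0) {τ : A →ₗ[F] A}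
    (ha : IsPrimJAxis F A α β a) (hM : IsMiyamoto F A α β a τ) (x : A) :
    a * x ∈ Submodule.span F {a, x, τ x} := by
  obtain ⟨x1, h1, xa, hxa, xb, hxb, rfl⟩ := exists_decomp3 ha.1 x
  obtain ⟨l, rfl⟩ := Submodule.mem_span_singleton.mp (ha.2 ▸ h1)
  have hτ : τ (l • a + xa + xb) = l • a + xa - xb :=
    tau_apply hM (add_mem (Submodule.mem_sup_left h1) (Submodule.mem_sup_right hxa)) hxb
  have ea : a * (l • a) = l • a := by
    rw [mul_smul_comm, ha.1.idem]
  have key : a * (l • a + xa + xb) =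
      (l * (1 - α)) • a + ((α + β) / 2) • (l • a + xa + xb)
        + ((α - β) / 2) • (τ (l • a + xa + xb)) := by
    rw [hτ, mul_add, mul_add, ea, mem_eigSp.mp hxa, mem_eigSp.mp hxb]
    match_scalars <;> field_simp <;> ring
  rw [key]
  refine add_mem (add_mem (Submodule.smul_mem _ _ ?_) (Submodule.smul_mem _ _ ?_))
    (Submodule.smul_mem _ _ ?_) <;>
    apply Submodule.subset_span <;> simp


lemma mem_Sbracket_of_S {T : A → (A →ₗ[F] A)} {S : Set A} {i : ℕ} {b : A} (hb : b ∈ S) :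
    b ∈ Sbracket F A T S i :=
  Submodule.subset_span ⟨[], by simp, by simp, b, hb, rfl⟩

lemma Sbracket_mono {T : A → (A →ₗ[F] A)} {S : Set A} {i j : ℕ} (hij : i ≤ j) :
    Sbracket F A T S i ≤ Sbracket F A T S j :=
  Submodule.span_mono fun x ⟨as, hl, hs, hb⟩ => ⟨as, hl.trans hij, hs, hb⟩

lemma T_map_Sbracket {T : A → (A →ₗ[F] A)} {S : Set A} {i : ℕ} {a : A} (ha : a ∈ S)
    {x : A} (hx : x ∈ Sbracket F A T S i) : T a x ∈ Sbracket F A T S (i + 1) := by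
  have hle : Submodule.map (T a) (Sbracket F A T S i) ≤ Sbracket F A T S (i + 1) := by
    rw [Sbracket, Submodule.map_span]
    apply Submodule.span_mono
    rintro _ ⟨x, ⟨as, hl, hs, b, hb, rfl⟩, rfl⟩
    refine ⟨a :: as, by simpa using hl, ?_, b, hb, rfl⟩
    intro c hc
    rcases List.mem_cons.mp hc with rfl | hc
    exacts [ha, hs c hc]
  exact hle ⟨x, hx, rfl⟩

lemma Sbracket_stab {T : A → (A →ₗ[F] A)} {S : Set A} {n : ℕ}
    (hstab : Sbracket F A T S n = Sbracket F A T S (n + 1)) :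
    ∀ m, n ≤ m → Sbracket F A T S m = Sbracket F A T S n := by
  intro m hm
  induction m, hm using Nat.le_induction with
  | base => rfl
  | succ m hm ih =>
    refine le_antisymm ?_ (Sbracket_mono (hm.trans (Nat.le_succ m)))
    rw [Sbracket]
    apply Submodule.span_le.mpr
    rintro x ⟨as, hl, hs, b, hb, rfl⟩
    cases as with
    | nil => exact mem_Sbracket_of_S hb
    | cons a as' =>
      have h1 : (as'.foldr (fun a y => T a y) b) ∈ Sbracket F A T S m :=
        Submodule.subset_span ⟨as', by simpa using Nat.succ_le_succ_iff.mp hl,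
          fun c hc => hs c (List.mem_cons_of_mem a hc), b, hb, rfl⟩
    -- fix: hl : (a::as').length ≤ m + 1
      rw [ih] at h1
      have h2 := T_map_Sbracket (hs a (List.mem_cons_self (a := a) (l := as'))) h1
      rw [← hstab] at h2
      exact h2

lemma Tstable {T : A → (A →ₗ[F] A)} {S : Set A} {n : ℕ}
    (hstab : Sbracket F A T S n = Sbracket F A T S (n + 1)) {a : A} (ha : a ∈ S)
    {x : A} (hx : x ∈ Sbracket F A T S n) : T a x ∈ Sbracket F A T S n := by
  rw [hstab]; exact T_map_Sbracket ha hx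


end AuxLemmas

theorem stabilized_span_is_all (α β : F) (h2 : (2 : F) ≠ 0)
    (hα1 : α ≠ 1) (hβ1 : β ≠ 1) (hαβ : α ≠ β)
    (S : Set A) (hSfin : S.Finite)
    (hSprim : ∀ a ∈ S, IsPrimJAxis F A α β a)
    (hgen : NonUnitalAlgebra.adjoin F S = ⊤)
    (T : A → (A →ₗ[F] A)) (hT : ∀ a ∈ S, IsMiyamoto F A α β a (T a))
    (n : ℕ) (hn : 1 ≤ n)
    (hstab : Sbracket F A T S n = Sbracket F A T S (n + 1)) :
    Sbracket F A T S n = ⊤ := by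
  have key : ∀ (as : List A), (∀ a ∈ as, a ∈ S) → ∀ b ∈ S, ∀ y ∈ Sbracket F A T S n,
      (as.foldr (fun a y => T a y) b) * y ∈ Sbracket F A T S n := by
    intro as
    induction as with
    | nil =>
      intro _ b hb y hy
      have h := mul_axis_mem_span h2 (hSprim b hb) (hT b hb) y
      refine Submodule.span_le.mpr ?_ h
      rintro z hz
      simp only [Set.mem_insert_iff, Set.mem_singleton_iff] at hz
      rcases hz with rfl | rfl | rfl
      exacts [mem_Sbracket_of_S hb, hy, Tstable hstab hb hy]
    | cons a as' ih =>
      intro hmem b hb y hy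
      have ha : a ∈ S := hmem a (List.mem_cons_self (a := a) (l := as'))
      have hz : T a y ∈ Sbracket F A T S n := Tstable hstab ha hy
      have h1 := ih (fun c hc => hmem c (List.mem_cons_of_mem a hc)) b hb _ hz
      have h2' := Tstable hstab ha h1
      rw [tau_mul (hSprim a ha).1 (hT a ha), tau_invol (hSprim a ha).1 (hT a ha)] at h2'
      exact h2'
  have hmul : ∀ x y, x ∈ Sbracket F A T S n → y ∈ Sbracket F A T S n →
      x * y ∈ Sbracket F A T S n := by
    intro x y hx hy
    induction hx using Submodule.span_induction with
    | mem z hz =>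
      obtain ⟨as, hl, hs, b, hb, rfl⟩ := hz
      exact key as hs b hb y hy
    | zero => rw [zero_mul]; exact zero_mem _
    | add x1 x2 _ _ i1 i2 => rw [add_mul]; exact add_mem i1 i2
    | smul c x1 _ i1 => rw [smul_mul_assoc]; exact Submodule.smul_mem _ _ i1
  let N : NonUnitalSubalgebra F A := (Sbracket F A T S n).toNonUnitalSubalgebra hmul
  have hS : S ⊆ N := fun b hb => mem_Sbracket_of_S hb
  have hle : NonUnitalAlgebra.adjoin F S ≤ N := NonUnitalAlgebra.adjoin_le hS
  rw [hgen] at hle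
  refine eq_top_iff.mpr fun x _ => ?_
  exact hle (show x ∈ (⊤ : NonUnitalSubalgebra F A) from trivial)
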